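/- The 2-marginals for 3-tables of size (3,4,6) obtained by applying the Theorem 1.4 construction to the (2,2,2) bounds p with p_{1,1,1}=p_{2,2,1}=p_{1,2,2}=p_{2,1,2}=1, p_{1,2,1}=p_{2,1,1}=p_{1,1,2}=p_{2,2,2}=0 and all 1-marginals equal to 1 are real-feasible but integer-infeasible: there exists a nonnegative real (3,4,6)-array with these 2-marginals (all its entries in {0, 1/2}), but no nonnegative integer array with these 2-marginals exists. -/
import Mathlib



/-- The (2,2,2) bound array of Vlach's example: ones exactly at
(1,1,1),(2,2,1),(1,2,2),(2,1,2), i.e. at even coordinate sums. -/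
def vlachBound : Fin 2 → Fin 2 → Fin 2 → ℕ :=
  fun i j k => if (i.1 + j.1 + k.1) % 2 = 0 then 1 else 0


/-- `U = min (max_i u1 i) (max_j u2 j)` of the Theorem 1.4 construction. -/
def bigU (r c : ℕ) (u1 : Fin r → ℕ) (u2 : Fin c → ℕ) : ℕ :=
  min (Finset.univ.sup u1) (Finset.univ.sup u2)

open Sum in
/-- `v_{+,ij,gro k}` of the construction. -/
def margA (r c h : ℕ) (u1 : Fin r → ℕ) (u2 : Fin c → ℕ)
    (p : Fin r → Fin c → Fin h → ℕ) :
    Fin r × Fin c → (Fin h ⊕ Fin r ⊕ Fin c) → ℝ := fun a g =>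
  match g with
  | inl k => (p a.1 a.2 k : ℝ)
  | inr (inl i) => if i = a.1 then (bigU r c u1 u2 : ℝ) else 0
  | inr (inr j) => if j = a.2 then (bigU r c u1 u2 : ℝ) else 0

/-- `v_{t,ij,+}` of the construction. -/
def margT (r c h : ℕ) (u1 : Fin r → ℕ) (u2 : Fin c → ℕ)
    (p : Fin r → Fin c → Fin h → ℕ) :
    Fin 3 → Fin r × Fin c → ℝ := fun t a =>
  if t = 1 then ∑ k, (p a.1 a.2 k : ℝ) else (bigU r c u1 u2 : ℝ)

open Sum in
/-- `v_{t,+,gro k}` of the construction. -/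
def margG (r c h : ℕ) (u1 : Fin r → ℕ) (u2 : Fin c → ℕ) (u3 : Fin h → ℕ)
    (p : Fin r → Fin c → Fin h → ℕ) :
    Fin 3 → (Fin h ⊕ Fin r ⊕ Fin c) → ℝ := fun t g =>
  match g with
  | inl k => if t = 0 then (u3 k : ℝ)
      else if t = 1 then (∑ i, ∑ j, (p i j k : ℝ)) - (u3 k : ℝ) else 0
  | inr (inl i) => if t = 0 then (c : ℝ) * (bigU r c u1 u2 : ℝ) - (u1 i : ℝ)
      else if t = 1 then 0 else (u1 i : ℝ)
  | inr (inr j) => if t = 0 then 0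
      else if t = 1 then (u2 j : ℝ)
      else (r : ℝ) * (bigU r c u1 u2 : ℝ) - (u2 j : ℝ)


/-- Auxiliary: the fractional solution of Vlach's example. -/
noncomputable def vY : Fin 3 → Fin 2 × Fin 2 → (Fin 2 ⊕ Fin 2 ⊕ Fin 2) → ℝ := fun t a g =>
  match g with
  | .inl k => if (a.1.1 + a.2.1 + k.1) % 2 = 0 ∧ t ≠ 2 then 1/2 else 0
  | .inr (.inl i) => if i = a.1 ∧ t ≠ 1 then 1/2 else 0
  | .inr (.inr j) => if j = a.2 ∧ t ≠ 0 then 1/2 else 0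

lemma hU : bigU 2 2 (fun _ => 1) (fun _ => 1) = 1 := rfl

set_option maxHeartbeats 4000000 in
/-- Vlach's example: the 2-marginals for (3,4,6)-tables obtained by applying
the Theorem 1.4 construction to `vlachBound` with all 1-marginals 1 admit a
nonnegative real array (with all entries 0 or 1/2) but no integer table. -/
theorem vlach_real_feasible_integer_infeasible :
    (∃ y : Fin 3 → Fin 2 × Fin 2 → (Fin 2 ⊕ Fin 2 ⊕ Fin 2) → ℝ,
      (∀ t a g, 0 ≤ y t a g) ∧
      (∀ t a, ∑ g, y t a g =
        margT 2 2 2 (fun _ => 1) (fun _ => 1) vlachBound t a) ∧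
      (∀ t g, ∑ a, y t a g =
        margG 2 2 2 (fun _ => 1) (fun _ => 1) (fun _ => 1) vlachBound t g) ∧
      (∀ a g, ∑ t, y t a g =
        margA 2 2 2 (fun _ => 1) (fun _ => 1) vlachBound a g) ∧
      (∀ t a g, y t a g = 0 ∨ y t a g = 1 / 2)) ∧
    ¬ (∃ z : Fin 3 → Fin 2 × Fin 2 → (Fin 2 ⊕ Fin 2 ⊕ Fin 2) → ℕ,
      (∀ t a, ∑ g, (z t a g : ℝ) =
        margT 2 2 2 (fun _ => 1) (fun _ => 1) vlachBound t a) ∧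
      (∀ t g, ∑ a, (z t a g : ℝ) =
        margG 2 2 2 (fun _ => 1) (fun _ => 1) (fun _ => 1) vlachBound t g) ∧
      (∀ a g, ∑ t, (z t a g : ℝ) =
        margA 2 2 2 (fun _ => 1) (fun _ => 1) vlachBound a g)) := by
  constructor
  · refine ⟨vY, ?_, ?_, ?_, ?_, ?_⟩
    · intro t a g
      rcases g with k | i | j <;> simp [vY] <;> split <;> norm_num
    · intro t a
      fin_cases t <;> fin_cases a <;>
      · simp only [Fintype.sum_sum_type, Fin.sum_univ_two, margT, hU]
        norm_num [vY, vlachBound, Fin.ext_iff]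
    · intro t g
      rcases g with k | i | j <;> [fin_cases k; fin_cases i; fin_cases j] <;> fin_cases t <;>
      · simp only [Fintype.sum_prod_type, Fin.sum_univ_two, margG, hU]
        norm_num [vY, vlachBound, Fin.ext_iff]
    · intro a g
      rcases g with k | i | j <;> [fin_cases k; fin_cases i; fin_cases j] <;> fin_cases a <;>
      · simp only [Fin.sum_univ_three, margA, hU]
        norm_num [vY, vlachBound, Fin.ext_iff]
    · intro t a g
      rcases g with k | i | j <;> simp [vY] <;> tauto
  · rintro ⟨z, hT, hG, hA⟩
    have e1 : z 0 (0, 0) (Sum.inl 0) + z 0 (0, 1) (Sum.inl 0) + (z 0 (1, 0) (Sum.inl 0) + z 0 (1, 1) (Sum.inl 0)) = 1 := by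
      have h := hG 0 (Sum.inl 0)
      simp only [Fintype.sum_prod_type, Fin.sum_univ_two, margG, hU] at h
      norm_num [vlachBound, Fin.ext_iff] at h
      exact_mod_cast h
    have e2 : z 0 (0, 0) (Sum.inl 1) + z 0 (0, 1) (Sum.inl 1) + (z 0 (1, 0) (Sum.inl 1) + z 0 (1, 1) (Sum.inl 1)) = 1 := by
      have h := hG 0 (Sum.inl 1)
      simp only [Fintype.sum_prod_type, Fin.sum_univ_two, margG, hU] at h
      norm_num [vlachBound, Fin.ext_iff] at h
      exact_mod_cast h
    have e3 : z 0 (0, 0) (Sum.inr (Sum.inl 0)) + z 0 (0, 1) (Sum.inr (Sum.inl 0)) + (z 0 (1, 0) (Sum.inr (Sum.inl 0)) + z 0 (1, 1) (Sum.inr (Sum.inl 0))) = 1 := by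
      have h := hG 0 (Sum.inr (Sum.inl 0))
      simp only [Fintype.sum_prod_type, Fin.sum_univ_two, margG, hU] at h
      norm_num [vlachBound, Fin.ext_iff] at h
      exact_mod_cast h
    have e4 : z 0 (0, 0) (Sum.inr (Sum.inr 0)) + z 0 (0, 1) (Sum.inr (Sum.inr 0)) + (z 0 (1, 0) (Sum.inr (Sum.inr 0)) + z 0 (1, 1) (Sum.inr (Sum.inr 0))) = 0 := by
      have h := hG 0 (Sum.inr (Sum.inr 0))
      simp only [Fintype.sum_prod_type, Fin.sum_univ_two, margG, hU] at h
      norm_num [vlachBound, Fin.ext_iff] at h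
      exact_mod_cast h
    have e5 : z 0 (0, 0) (Sum.inr (Sum.inr 1)) + z 0 (0, 1) (Sum.inr (Sum.inr 1)) + (z 0 (1, 0) (Sum.inr (Sum.inr 1)) + z 0 (1, 1) (Sum.inr (Sum.inr 1))) = 0 := by
      have h := hG 0 (Sum.inr (Sum.inr 1))
      simp only [Fintype.sum_prod_type, Fin.sum_univ_two, margG, hU] at h
      norm_num [vlachBound, Fin.ext_iff] at h
      exact_mod_cast h
    have e6 : z 1 (0, 0) (Sum.inr (Sum.inl 0)) + z 1 (0, 1) (Sum.inr (Sum.inl 0)) + (z 1 (1, 0) (Sum.inr (Sum.inl 0)) + z 1 (1, 1) (Sum.inr (Sum.inl 0))) = 0 := by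
      have h := hG 1 (Sum.inr (Sum.inl 0))
      simp only [Fintype.sum_prod_type, Fin.sum_univ_two, margG, hU] at h
      norm_num [vlachBound, Fin.ext_iff] at h
      exact_mod_cast h
    have e7 : z 1 (0, 0) (Sum.inr (Sum.inl 1)) + z 1 (0, 1) (Sum.inr (Sum.inl 1)) + (z 1 (1, 0) (Sum.inr (Sum.inl 1)) + z 1 (1, 1) (Sum.inr (Sum.inl 1))) = 0 := by
      have h := hG 1 (Sum.inr (Sum.inl 1))
      simp only [Fintype.sum_prod_type, Fin.sum_univ_two, margG, hU] at h
      norm_num [vlachBound, Fin.ext_iff] at h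
      exact_mod_cast h
    have e8 : z 1 (0, 0) (Sum.inr (Sum.inr 1)) + z 1 (0, 1) (Sum.inr (Sum.inr 1)) + (z 1 (1, 0) (Sum.inr (Sum.inr 1)) + z 1 (1, 1) (Sum.inr (Sum.inr 1))) = 1 := by
      have h := hG 1 (Sum.inr (Sum.inr 1))
      simp only [Fintype.sum_prod_type, Fin.sum_univ_two, margG, hU] at h
      norm_num [vlachBound, Fin.ext_iff] at h
      exact_mod_cast h
    have e9 : z 2 (0, 0) (Sum.inl 0) + z 2 (0, 1) (Sum.inl 0) + (z 2 (1, 0) (Sum.inl 0) + z 2 (1, 1) (Sum.inl 0)) = 0 := by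
      have h := hG 2 (Sum.inl 0)
      simp only [Fintype.sum_prod_type, Fin.sum_univ_two, margG, hU] at h
      norm_num [vlachBound, Fin.ext_iff] at h
      exact_mod_cast h
    have e10 : z 2 (0, 0) (Sum.inl 1) + z 2 (0, 1) (Sum.inl 1) + (z 2 (1, 0) (Sum.inl 1) + z 2 (1, 1) (Sum.inl 1)) = 0 := by
      have h := hG 2 (Sum.inl 1)
      simp only [Fintype.sum_prod_type, Fin.sum_univ_two, margG, hU] at h
      norm_num [vlachBound, Fin.ext_iff] at h
      exact_mod_cast h
    have e11 : z 0 (0, 0) (Sum.inl 0) + z 1 (0, 0) (Sum.inl 0) + z 2 (0, 0) (Sum.inl 0) = 1 := by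
      have h := hA (0, 0) (Sum.inl 0)
      simp only [Fin.sum_univ_three, margA, hU] at h
      norm_num [vlachBound, Fin.ext_iff] at h
      exact_mod_cast h
    have e12 : z 0 (0, 0) (Sum.inl 1) + z 1 (0, 0) (Sum.inl 1) + z 2 (0, 0) (Sum.inl 1) = 0 := by
      have h := hA (0, 0) (Sum.inl 1)
      simp only [Fin.sum_univ_three, margA, hU] at h
      norm_num [vlachBound, Fin.ext_iff] at h
      exact_mod_cast h
    have e13 : z 0 (0, 1) (Sum.inl 0) + z 1 (0, 1) (Sum.inl 0) + z 2 (0, 1) (Sum.inl 0) = 0 := by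
      have h := hA (0, 1) (Sum.inl 0)
      simp only [Fin.sum_univ_three, margA, hU] at h
      norm_num [vlachBound, Fin.ext_iff] at h
      exact_mod_cast h
    have e14 : z 0 (0, 1) (Sum.inl 1) + z 1 (0, 1) (Sum.inl 1) + z 2 (0, 1) (Sum.inl 1) = 1 := by
      have h := hA (0, 1) (Sum.inl 1)
      simp only [Fin.sum_univ_three, margA, hU] at h
      norm_num [vlachBound, Fin.ext_iff] at h
      exact_mod_cast h
    have e15 : z 0 (1, 0) (Sum.inl 0) + z 1 (1, 0) (Sum.inl 0) + z 2 (1, 0) (Sum.inl 0) = 0 := by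
      have h := hA (1, 0) (Sum.inl 0)
      simp only [Fin.sum_univ_three, margA, hU] at h
      norm_num [vlachBound, Fin.ext_iff] at h
      exact_mod_cast h
    have e16 : z 0 (1, 0) (Sum.inl 1) + z 1 (1, 0) (Sum.inl 1) + z 2 (1, 0) (Sum.inl 1) = 1 := by
      have h := hA (1, 0) (Sum.inl 1)
      simp only [Fin.sum_univ_three, margA, hU] at h
      norm_num [vlachBound, Fin.ext_iff] at h
      exact_mod_cast h
    have e17 : z 0 (1, 1) (Sum.inl 0) + z 1 (1, 1) (Sum.inl 0) + z 2 (1, 1) (Sum.inl 0) = 1 := by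
      have h := hA (1, 1) (Sum.inl 0)
      simp only [Fin.sum_univ_three, margA, hU] at h
      norm_num [vlachBound, Fin.ext_iff] at h
      exact_mod_cast h
    have e18 : z 0 (1, 1) (Sum.inl 1) + z 1 (1, 1) (Sum.inl 1) + z 2 (1, 1) (Sum.inl 1) = 0 := by
      have h := hA (1, 1) (Sum.inl 1)
      simp only [Fin.sum_univ_three, margA, hU] at h
      norm_num [vlachBound, Fin.ext_iff] at h
      exact_mod_cast h
    have e19 : z 0 (1, 0) (Sum.inr (Sum.inl 0)) + z 1 (1, 0) (Sum.inr (Sum.inl 0)) + z 2 (1, 0) (Sum.inr (Sum.inl 0)) = 0 := by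
      have h := hA (1, 0) (Sum.inr (Sum.inl 0))
      simp only [Fin.sum_univ_three, margA, hU] at h
      norm_num [vlachBound, Fin.ext_iff] at h
      exact_mod_cast h
    have e20 : z 0 (1, 1) (Sum.inr (Sum.inl 0)) + z 1 (1, 1) (Sum.inr (Sum.inl 0)) + z 2 (1, 1) (Sum.inr (Sum.inl 0)) = 0 := by
      have h := hA (1, 1) (Sum.inr (Sum.inl 0))
      simp only [Fin.sum_univ_three, margA, hU] at h
      norm_num [vlachBound, Fin.ext_iff] at h
      exact_mod_cast h
    have e21 : z 0 (0, 0) (Sum.inr (Sum.inl 1)) + z 1 (0, 0) (Sum.inr (Sum.inl 1)) + z 2 (0, 0) (Sum.inr (Sum.inl 1)) = 0 := by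
      have h := hA (0, 0) (Sum.inr (Sum.inl 1))
      simp only [Fin.sum_univ_three, margA, hU] at h
      norm_num [vlachBound, Fin.ext_iff] at h
      exact_mod_cast h
    have e22 : z 0 (0, 1) (Sum.inr (Sum.inl 1)) + z 1 (0, 1) (Sum.inr (Sum.inl 1)) + z 2 (0, 1) (Sum.inr (Sum.inl 1)) = 0 := by
      have h := hA (0, 1) (Sum.inr (Sum.inl 1))
      simp only [Fin.sum_univ_three, margA, hU] at h
      norm_num [vlachBound, Fin.ext_iff] at h
      exact_mod_cast h
    have e23 : z 0 (0, 0) (Sum.inr (Sum.inr 1)) + z 1 (0, 0) (Sum.inr (Sum.inr 1)) + z 2 (0, 0) (Sum.inr (Sum.inr 1)) = 0 := by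
      have h := hA (0, 0) (Sum.inr (Sum.inr 1))
      simp only [Fin.sum_univ_three, margA, hU] at h
      norm_num [vlachBound, Fin.ext_iff] at h
      exact_mod_cast h
    have e24 : z 0 (1, 0) (Sum.inr (Sum.inr 1)) + z 1 (1, 0) (Sum.inr (Sum.inr 1)) + z 2 (1, 0) (Sum.inr (Sum.inr 1)) = 0 := by
      have h := hA (1, 0) (Sum.inr (Sum.inr 1))
      simp only [Fin.sum_univ_three, margA, hU] at h
      norm_num [vlachBound, Fin.ext_iff] at h
      exact_mod_cast h
    have e25 : z 0 (0, 1) (Sum.inr (Sum.inr 0)) + z 1 (0, 1) (Sum.inr (Sum.inr 0)) + z 2 (0, 1) (Sum.inr (Sum.inr 0)) = 0 := by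
      have h := hA (0, 1) (Sum.inr (Sum.inr 0))
      simp only [Fin.sum_univ_three, margA, hU] at h
      norm_num [vlachBound, Fin.ext_iff] at h
      exact_mod_cast h
    have e26 : z 0 (1, 1) (Sum.inr (Sum.inr 0)) + z 1 (1, 1) (Sum.inr (Sum.inr 0)) + z 2 (1, 1) (Sum.inr (Sum.inr 0)) = 0 := by
      have h := hA (1, 1) (Sum.inr (Sum.inr 0))
      simp only [Fin.sum_univ_three, margA, hU] at h
      norm_num [vlachBound, Fin.ext_iff] at h
      exact_mod_cast h
    have e27 : z 0 (0, 0) (Sum.inl 0) + z 0 (0, 0) (Sum.inl 1) + (z 0 (0, 0) (Sum.inr (Sum.inl 0)) + z 0 (0, 0) (Sum.inr (Sum.inl 1)) + (z 0 (0, 0) (Sum.inr (Sum.inr 0)) + z 0 (0, 0) (Sum.inr (Sum.inr 1)))) = 1 := by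
      have h := hT 0 (0, 0)
      simp only [Fintype.sum_sum_type, Fin.sum_univ_two, margT, hU] at h
      norm_num [vlachBound] at h
      exact_mod_cast h
    have e28 : z 0 (0, 1) (Sum.inl 0) + z 0 (0, 1) (Sum.inl 1) + (z 0 (0, 1) (Sum.inr (Sum.inl 0)) + z 0 (0, 1) (Sum.inr (Sum.inl 1)) + (z 0 (0, 1) (Sum.inr (Sum.inr 0)) + z 0 (0, 1) (Sum.inr (Sum.inr 1)))) = 1 := by
      have h := hT 0 (0, 1)
      simp only [Fintype.sum_sum_type, Fin.sum_univ_two, margT, hU] at h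
      norm_num [vlachBound] at h
      exact_mod_cast h
    have e29 : z 1 (0, 1) (Sum.inl 0) + z 1 (0, 1) (Sum.inl 1) + (z 1 (0, 1) (Sum.inr (Sum.inl 0)) + z 1 (0, 1) (Sum.inr (Sum.inl 1)) + (z 1 (0, 1) (Sum.inr (Sum.inr 0)) + z 1 (0, 1) (Sum.inr (Sum.inr 1)))) = 1 := by
      have h := hT 1 (0, 1)
      simp only [Fintype.sum_sum_type, Fin.sum_univ_two, margT, hU] at h
      norm_num [vlachBound] at h
      exact_mod_cast h
    have e30 : z 1 (1, 1) (Sum.inl 0) + z 1 (1, 1) (Sum.inl 1) + (z 1 (1, 1) (Sum.inr (Sum.inl 0)) + z 1 (1, 1) (Sum.inr (Sum.inl 1)) + (z 1 (1, 1) (Sum.inr (Sum.inr 0)) + z 1 (1, 1) (Sum.inr (Sum.inr 1)))) = 1 := by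
      have h := hT 1 (1, 1)
      simp only [Fintype.sum_sum_type, Fin.sum_univ_two, margT, hU] at h
      norm_num [vlachBound] at h
      exact_mod_cast h
    omega
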